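/- Let f : ℝⁿ → ℝ be symmetric and strictly concave on the probability simplex Ωₙ (f(λx + (1−λ)y) > λf(x) + (1−λ)f(y) for all x ≠ y in Ωₙ and 0 < λ < 1). Let ρ be an n×n density matrix and {(p_k, ψ_k)} a pure state decomposition of ρ whose average coherence attains the upper bound, i.e. Σ_k p_k f(|ψ_k(0)|², …, |ψ_k(n−1)|²) = f(ρ₀₀, …, ρ_{n−1,n−1}). Then for every k with p_k > 0 one has |ψ_k(i)|² = ρ_ii for all i. (Necessity of the equality condition in Theorem 1 under strict concavity.) -/

import Mathlib

open Matrix BigOperators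
open scoped ComplexOrder

noncomputable section

/-- A symmetric function: invariant under all coordinate permutations. -/
def SymmetricFn {n : ℕ} (f : (Fin n → ℝ) → ℝ) : Prop :=
  ∀ (σ : Equiv.Perm (Fin n)) (x : Fin n → ℝ), f (x ∘ σ) = f x

/-- A density matrix: positive semidefinite with trace one. -/
def IsDensityMatrix {n : ℕ} (ρ : Matrix (Fin n) (Fin n) ℂ) : Prop :=
  ρ.PosSemidef ∧ ρ.trace = 1

/-- The rank-one projection `ψ ψ*` associated to a vector `ψ ∈ ℂⁿ`. -/
def outer {n : ℕ} (ψ : Fin n → ℂ) : Matrix (Fin n) (Fin n) ℂ :=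
  Matrix.vecMulVec ψ (fun i => starRingEnd ℂ (ψ i))

/-- `(p, ψ)` is a pure state decomposition of `ρ`. -/
def IsDecomposition {n m : ℕ} (ρ : Matrix (Fin n) (Fin n) ℂ)
    (p : Fin m → ℝ) (ψ : Fin m → Fin n → ℂ) : Prop :=
  (∀ k, 0 ≤ p k) ∧ (∑ k, p k = 1) ∧ (∀ k, ∑ i, ‖ψ k i‖ ^ 2 = 1) ∧
    ρ = ∑ k, (p k : ℂ) • outer (ψ k)

/-- The coherence vector `(|ψ₀|², …, |ψ_{n-1}|²)` of a vector `ψ`. -/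
def cohVec {n : ℕ} (ψ : Fin n → ℂ) : Fin n → ℝ := fun i => ‖ψ i‖ ^ 2

/-- The average coherence of a pure state decomposition with respect to `f`. -/
def avgCoh {n m : ℕ} (f : (Fin n → ℝ) → ℝ) (p : Fin m → ℝ)
    (ψ : Fin m → Fin n → ℂ) : ℝ :=
  ∑ k, p k * f (cohVec (ψ k))


/-- Necessity of the equality condition in Theorem 1 under strict concavity:
if the average coherence of a decomposition attains the upper bound
`f(ρ₀₀, …, ρ_{n-1,n-1})` for a symmetric, strictly concave `f`, then every
pure state occurring with positive weight has the same diagonal as `ρ`. -/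
theorem same_diag_of_avg_coherence_eq_f_diag {n : ℕ}
    (f : (Fin n → ℝ) → ℝ) (hsym : SymmetricFn f)
    (hconc : StrictConcaveOn ℝ (stdSimplex ℝ (Fin n)) f)
    (ρ : Matrix (Fin n) (Fin n) ℂ) (hρ : IsDensityMatrix ρ)
    {m : ℕ} (p : Fin m → ℝ) (ψ : Fin m → Fin n → ℂ)
    (hdec : IsDecomposition ρ p ψ)
    (heq : avgCoh f p ψ = f (fun i => (ρ i i).re)) :
    ∀ k, 0 < p k → ∀ i, ‖ψ k i‖ ^ 2 = (ρ i i).re := by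
  obtain ⟨hp0, hp1, hψ1, hρeq⟩ := hdec
  have hdiag : (fun i => (ρ i i).re) = ∑ k, p k • cohVec (ψ k) := by
    funext i
    rw [hρeq]
    simp only [Matrix.sum_apply, Matrix.smul_apply, outer, Matrix.vecMulVec_apply,
      smul_eq_mul, Finset.sum_apply, Pi.smul_apply]
    rw [Complex.re_sum]
    congr 1
    funext k
    have h : (ψ k i * starRingEnd ℂ (ψ k i)) = ((‖ψ k i‖ ^ 2 : ℝ) : ℂ) := by
      rw [Complex.mul_conj, Complex.normSq_eq_norm_sq]
    rw [h, ← Complex.ofReal_mul, Complex.ofReal_re]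
    rfl
  have hmem : ∀ k ∈ Finset.univ, cohVec (ψ k) ∈ stdSimplex ℝ (Fin n) := by
    intro k _
    exact ⟨fun i => sq_nonneg _, hψ1 k⟩
  have key := (hconc.map_sum_eq_iff' (t := Finset.univ) (w := p) (p := fun k => cohVec (ψ k))
      (fun k _ => hp0 k) hp1 hmem)
  rw [hdiag] at heq
  have h2 : f (∑ k, p k • cohVec (ψ k)) = ∑ k, p k • f (cohVec (ψ k)) := by
    rw [← heq]; rfl
  intro k hk i
  have := key.mp h2 k (Finset.mem_univ k) (ne_of_gt hk)
  have := congrFun this i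
  simp only [cohVec] at this
  rw [show (ρ i i).re = (fun i => (ρ i i).re) i from rfl, hdiag]
  exact this
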